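/- For every m > 0 and every positive integer p, the equation tan(2√E) + √E/m = 0 has a unique solution E in the interval ((2p-1)²π²/16, p²π²/4). -/
import Mathlib


open Real

/-- For every `m > 0` and every positive integer `p`, the equation
`tan (2√E) + √E / m = 0` has a unique solution `E` in the interval
`((2p-1)²π²/16, p²π²/4)`. -/
theorem unique_root_tan_eq (m : ℝ) (hm : 0 < m) (p : ℕ) (hp : 1 ≤ p) :
    ∃! E : ℝ, E ∈ Set.Ioo (((2 * p - 1 : ℝ))^2 * π^2 / 16) ((p : ℝ)^2 * π^2 / 4) ∧
      Real.tan (2 * Real.sqrt E) + Real.sqrt E / m = 0 := by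
  have hπ := Real.pi_pos
  have hq : (1:ℝ) ≤ (p:ℝ) := by exact_mod_cast hp
  set q : ℝ := (p:ℝ) with hqdef
  set h : ℝ → ℝ := fun t => Real.tan t + (t + q * π) / (2 * m) with hh
  -- strict monotonicity
  have hmono : StrictMonoOn h (Set.Ioo (-(π/2)) (π/2)) := by
    intro x hx y hy hxy
    have h1 := Real.strictMonoOn_tan hx hy hxy
    have h2 : (x + q * π) / (2 * m) < (y + q * π) / (2 * m) := by
      have h2m : (0:ℝ) < 2 * m := by linarith
      gcongr

    simp only [hh]
    exact add_lt_add h1 h2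
  -- continuity on the closed interval inside
  have hcont : ContinuousOn h (Set.Ioo (-(π/2)) (π/2)) := by
    intro t ht
    have hcos : Real.cos t ≠ 0 := ne_of_gt (Real.cos_pos_of_mem_Ioo ht)
    exact ((Real.continuousAt_tan.2 hcos).add (by fun_prop)).continuousWithinAt
  have h0pos : 0 < h 0 := by
    simp only [hh, Real.tan_zero, zero_add]
    positivity
  -- find a point where h is negative
  have htend : Filter.Tendsto h (nhdsWithin (-(π/2)) (Set.Ioi (-(π/2)))) Filter.atBot := by
    have hlin : Filter.Tendsto (fun t : ℝ => (t + q * π) / (2 * m))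
        (nhdsWithin (-(π/2)) (Set.Ioi (-(π/2)))) (nhds ((-(π/2) + q * π) / (2 * m))) := by
      apply Filter.Tendsto.mono_left _ nhdsWithin_le_nhds
      exact ((continuous_id.add continuous_const).div_const _).tendsto _
    have := hlin.add_atBot Real.tendsto_tan_neg_pi_div_two
    refine this.congr (fun t => ?_)
    simp only [hh]; ring
  have hev : ∀ᶠ t in nhdsWithin (-(π/2)) (Set.Ioi (-(π/2))),
      h t < 0 ∧ t ∈ Set.Ioo (-(π/2)) 0 := by
    refine (htend.eventually (Filter.eventually_lt_atBot 0)).and ?_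
    exact Filter.eventually_of_mem (Ioo_mem_nhdsGT_of_mem ⟨le_refl _, by linarith⟩)
      (fun t ht => ht)
  obtain ⟨a, ha_neg, ha_mem⟩ := hev.exists
  -- IVT on [a, 0]
  have hsub : Set.Icc a 0 ⊆ Set.Ioo (-(π/2)) (π/2) := fun t ht =>
    ⟨lt_of_lt_of_le ha_mem.1 ht.1, lt_of_le_of_lt ht.2 (by linarith)⟩
  have h0mem : (0:ℝ) ∈ Set.Ioo (h a) (h 0) := ⟨ha_neg, h0pos⟩
  obtain ⟨t₀, ht₀mem, ht₀⟩ := intermediate_value_Ioo (le_of_lt ha_mem.2)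
    (hcont.mono hsub) h0mem
  have ht₀Ioo : t₀ ∈ Set.Ioo (-(π/2)) 0 := ⟨lt_trans ha_mem.1 ht₀mem.1, ht₀mem.2⟩
  -- key correspondence
  have hqπ : π / 2 < q * π := by nlinarith
  have key : ∀ E : ℝ,
      E ∈ Set.Ioo (((2 * q - 1 : ℝ))^2 * π^2 / 16) ((q : ℝ)^2 * π^2 / 4) →
      (2 * Real.sqrt E - q * π ∈ Set.Ioo (-(π/2)) 0) ∧
      ((Real.tan (2 * Real.sqrt E) + Real.sqrt E / m = 0) ↔ h (2 * Real.sqrt E - q * π) = 0) := by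
    intro E hE
    have hlo : ((2 * q - 1) * π / 4)^2 < E := by nlinarith [hE.1]
    have hhi : E < (q * π / 2)^2 := by nlinarith [hE.2]
    have hlo' : (2 * q - 1) * π / 4 < Real.sqrt E :=
      (Real.lt_sqrt (by nlinarith)).mpr hlo
    have hhi' : Real.sqrt E < q * π / 2 := (Real.sqrt_lt' (by positivity)).mpr hhi
    have hmem : 2 * Real.sqrt E - q * π ∈ Set.Ioo (-(π/2)) 0 :=
      ⟨by linarith, by linarith⟩
    refine ⟨hmem, ?_⟩
    have hper : Real.tan (2 * Real.sqrt E - q * π) = Real.tan (2 * Real.sqrt E) := by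
      rw [hqdef]
      exact Real.tan_periodic.sub_nat_mul_eq p
    have : h (2 * Real.sqrt E - q * π)
        = Real.tan (2 * Real.sqrt E) + Real.sqrt E / m := by
      simp only [hh, hper]
      field_simp
      ring
    rw [this]
  -- the solution
  set E₀ : ℝ := ((t₀ + q * π) / 2)^2 with hE₀def
  have ht₀pos : 0 < (t₀ + q * π) / 2 := by
    have := ht₀Ioo.1
    have : -(π/2) < t₀ := ht₀Ioo.1
    linarith
  have hsqrtE₀ : Real.sqrt E₀ = (t₀ + q * π) / 2 := Real.sqrt_sq (le_of_lt ht₀pos)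
  have hE₀mem : E₀ ∈ Set.Ioo (((2 * q - 1 : ℝ))^2 * π^2 / 16) ((q : ℝ)^2 * π^2 / 4) := by
    constructor
    · have h1 : (2 * q - 1) * π / 4 < (t₀ + q * π) / 2 := by
        have := ht₀Ioo.1; linarith
      have h2 : 0 < (2 * q - 1) * π / 4 := by nlinarith
      nlinarith
    · have h1 : (t₀ + q * π) / 2 < q * π / 2 := by
        have := ht₀Ioo.2; linarith
      nlinarith
  have ht₀eq : 2 * Real.sqrt E₀ - q * π = t₀ := by rw [hsqrtE₀]; ring
  refine ⟨E₀, ⟨hE₀mem, ?_⟩, ?_⟩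
  · rw [(key E₀ hE₀mem).2, ht₀eq, ht₀]
  · rintro E ⟨hEmem, hEeq⟩
    obtain ⟨hmemE, hiffE⟩ := key E hEmem
    have hEroot : h (2 * Real.sqrt E - q * π) = 0 := hiffE.mp hEeq
    have hIoo_sub : Set.Ioo (-(π/2)) (0:ℝ) ⊆ Set.Ioo (-(π/2)) (π/2) :=
      Set.Ioo_subset_Ioo (le_refl _) (by linarith)
    have hteq : 2 * Real.sqrt E - q * π = t₀ :=
      hmono.injOn (hIoo_sub hmemE) (hIoo_sub ht₀Ioo) (by rw [hEroot, ht₀])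
    have hsE : Real.sqrt E = (t₀ + q * π) / 2 := by linarith
    have hEnn : 0 ≤ E := by
      have := hEmem.1
      nlinarith
    calc E = (Real.sqrt E)^2 := (Real.sq_sqrt hEnn).symm
    _ = E₀ := by rw [hsE]
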